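/- Strong group incentive ratio upper bound for Maximum Nash Welfare: for every coalition size c ≥ 1, the following holds. Let v_1, …, v_n be additive valuations over m divisible goods such that each agent has strictly positive value for at least one good, let C ⊆ [n] with |C| ≤ c, and let v'_C be manipulated additive valuations (each corrupted agent still having strictly positive value for at least one good). Let x be any fractional allocation maximizing Nash welfare for the true profile v, and let x' be any fractional allocation maximizing Nash welfare for the manipulated profile (v'_C, v_{−C}). If v_a(x_a) ≤ v_a(x'_a) for every a ∈ C, then v_a(x'_a) ≤ (c + 1)·v_a(x_a) for every a ∈ C. -/

import Mathlib

/-- A fractional allocation: nonnegative entries, each good fully allocated. -/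
def IsFracAlloc (n m : ℕ) (x : Fin n → Fin m → ℝ) : Prop :=
  (∀ a g, 0 ≤ x a g) ∧ ∀ g, ∑ a, x a g = 1

/-- The value of the bundle `y` under the additive valuation `v`. -/
noncomputable def addVal {m : ℕ} (v y : Fin m → ℝ) : ℝ := ∑ g, v g * y g

/-- `x` is a fractional allocation maximizing Nash welfare for the profile `v`. -/
def IsMNW (n m : ℕ) (v x : Fin n → Fin m → ℝ) : Prop :=
  IsFracAlloc n m x ∧
    ∀ y : Fin n → Fin m → ℝ, IsFracAlloc n m y →
      (∏ a, addVal (v a) (y a)) ≤ ∏ a, addVal (v a) (x a)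

open Finset

lemma firstOrder {n : ℕ} (u w : Fin n → ℝ) (hu : ∀ a, 0 < u a)
    (h : ∀ t ∈ Set.Icc (0:ℝ) 1, (∏ a, ((1-t) * u a + t * w a)) ≤ ∏ a, u a) :
    ∑ a, w a / u a ≤ n := by
  set g : ℝ → ℝ := fun t => ∏ a, (u a + t * (w a - u a)) with hg
  have hfd : ∀ (t : ℝ), HasDerivAt g (∑ a, (∏ b ∈ univ.erase a, (u b + t * (w b - u b))) • (w a - u a)) t := by
    intro t
    exact HasDerivAt.fun_finsetProd (fun a _ => by
      simpa using ((hasDerivAt_id t).mul_const (w a - u a)).const_add (u a))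
  have hgeq : ∀ t : ℝ, g t = ∏ a, ((1-t) * u a + t * w a) := by
    intro t; apply Finset.prod_congr rfl; intro a _; ring
  have hle : ∀ t ∈ Set.Icc (0:ℝ) 1, g t ≤ g 0 := by
    intro t ht
    rw [hgeq t, hgeq 0]
    simpa using h t ht
  set D : ℝ := ∑ a, (∏ b ∈ univ.erase a, (u b + 0 * (w b - u b))) • (w a - u a) with hD
  have hD0 : D ≤ 0 := by
    have hdw : HasDerivWithinAt g D (Set.Ioi (0:ℝ)) 0 := (hfd 0).hasDerivWithinAt
    rw [hasDerivWithinAt_iff_tendsto_slope,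
      Set.diff_singleton_eq_self (by simp : (0:ℝ) ∉ Set.Ioi 0)] at hdw
    refine le_of_tendsto hdw ?_
    have hmem : Set.Ioc (0:ℝ) 1 ∈ nhdsWithin (0:ℝ) (Set.Ioi 0) :=
      Ioc_mem_nhdsGT_of_mem (by constructor <;> norm_num)
    filter_upwards [hmem] with t ht
    have ht0 : 0 < t := ht.1
    have : g t ≤ g 0 := hle t ⟨le_of_lt ht.1, ht.2⟩
    rw [slope_def_field]
    apply div_nonpos_of_nonpos_of_nonneg <;> linarith
  have hP : (0:ℝ) < ∏ a, u a := Finset.prod_pos (fun a _ => hu a)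
  have key : D = (∏ a, u a) * ∑ a, (w a / u a - 1) := by
    rw [hD, Finset.mul_sum]
    apply Finset.sum_congr rfl
    intro a _
    have h1 : (∏ b ∈ univ.erase a, (u b + 0 * (w b - u b))) = ∏ b ∈ univ.erase a, u b := by
      apply Finset.prod_congr rfl; intro b _; ring
    have h2 : u a * ∏ b ∈ univ.erase a, u b = ∏ b, u b := Finset.mul_prod_erase univ u (mem_univ a)
    rw [h1, smul_eq_mul, ← h2]
    have hua := (hu a).ne'
    field_simp
  rw [key] at hD0
  have hsum : ∑ a, (w a / u a - 1) ≤ 0 := by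
    by_contra hcon
    push_neg at hcon
    nlinarith
  have heq : ∑ a, (w a / u a - 1) = (∑ a, w a / u a) - n := by
    rw [Finset.sum_sub_distrib]
    simp
  linarith [heq ▸ hsum]

lemma addVal_nonneg {m : ℕ} {v y : Fin m → ℝ} (hv : ∀ g, 0 ≤ v g) (hy : ∀ g, 0 ≤ y g) :
    0 ≤ addVal v y :=
  Finset.sum_nonneg fun g _ => mul_nonneg (hv g) (hy g)

lemma mnw_pos {n m : ℕ} (hn : 0 < n) (v x : Fin n → Fin m → ℝ) (hv : ∀ a g, 0 ≤ v a g)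
    (hpos : ∀ a, ∃ g, 0 < v a g) (hx : IsMNW n m v x) : ∀ a, 0 < addVal (v a) (x a) := by
  have hnR : (0:ℝ) < n := by exact_mod_cast hn
  set y : Fin n → Fin m → ℝ := fun _ _ => (n:ℝ)⁻¹ with hy
  have hyalloc : IsFracAlloc n m y := by
    constructor
    · intro a g; positivity
    · intro g; simp [hy, Finset.card_univ]
      field_simp
  have hyval : ∀ a, 0 < addVal (v a) (y a) := by
    intro a
    obtain ⟨g0, hg0⟩ := hpos a
    have : (0:ℝ) < ∑ g, v a g := Finset.sum_pos' (fun g _ => hv a g) ⟨g0, mem_univ g0, hg0⟩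
    simp only [addVal, hy]
    rw [← Finset.sum_mul]
    positivity
  have hprod : (0:ℝ) < ∏ a, addVal (v a) (x a) :=
    lt_of_lt_of_le (Finset.prod_pos fun a _ => hyval a) (hx.2 y hyalloc)
  intro a
  rcases lt_or_eq_of_le (addVal_nonneg (hv a) (fun g => hx.1.1 a g)) with h | h
  · exact h
  · exfalso
    have : (∏ a, addVal (v a) (x a)) = 0 := Finset.prod_eq_zero (mem_univ a) h.symm
    linarith

lemma comb_alloc {n m : ℕ} {x x' : Fin n → Fin m → ℝ} (hx : IsFracAlloc n m x)
    (hx' : IsFracAlloc n m x') {t : ℝ} (ht : t ∈ Set.Icc (0:ℝ) 1) :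
    IsFracAlloc n m (fun a g => (1-t) * x a g + t * x' a g) := by
  obtain ⟨ht0, ht1⟩ := ht
  constructor
  · intro a g
    have := hx.1 a g; have := hx'.1 a g
    have h1t : 0 ≤ 1 - t := by linarith
    positivity
  · intro g
    rw [Finset.sum_add_distrib, ← Finset.mul_sum, ← Finset.mul_sum, hx.2 g, hx'.2 g]
    ring

lemma addVal_comb {m : ℕ} (v x y : Fin m → ℝ) (t : ℝ) :
    addVal v (fun g => (1-t) * x g + t * y g) = (1-t) * addVal v x + t * addVal v y := by
  simp only [addVal, Finset.mul_sum, ← Finset.sum_add_distrib]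
  apply Finset.sum_congr rfl
  intro g _
  ring

/-- SGIR upper bound `c + 1` for Maximum Nash Welfare. -/
theorem stmt1 (c : ℕ) (hc : 1 ≤ c) (n m : ℕ)
    (v v' : Fin n → Fin m → ℝ)
    (hv : ∀ a g, 0 ≤ v a g) (hv' : ∀ a g, 0 ≤ v' a g)
    (hpos : ∀ a, ∃ g, 0 < v a g) (hpos' : ∀ a, ∃ g, 0 < v' a g)
    (C : Finset (Fin n)) (hC : C.card ≤ c)
    (hhonest : ∀ a ∉ C, v' a = v a)
    (x x' : Fin n → Fin m → ℝ)
    (hx : IsMNW n m v x) (hx' : IsMNW n m v' x')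
    (hbetter : ∀ a ∈ C, addVal (v a) (x a) ≤ addVal (v a) (x' a)) :
    ∀ a ∈ C, addVal (v a) (x' a) ≤ ((c : ℝ) + 1) * addVal (v a) (x a) := by
  intro b hb
  have hn : 0 < n := b.pos
  set u : Fin n → ℝ := fun a => addVal (v a) (x a) with hu_def
  set w : Fin n → ℝ := fun a => addVal (v a) (x' a) with hw_def
  set u' : Fin n → ℝ := fun a => addVal (v' a) (x' a) with hu'_def
  set w' : Fin n → ℝ := fun a => addVal (v' a) (x a) with hw'_def
  have hu : ∀ a, 0 < u a := mnw_pos hn v x hv hpos hx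
  have hu' : ∀ a, 0 < u' a := mnw_pos hn v' x' hv' hpos' hx'
  have hw : ∀ a, 0 ≤ w a := fun a => addVal_nonneg (hv a) (fun g => hx'.1.1 a g)
  have hw' : ∀ a, 0 ≤ w' a := fun a => addVal_nonneg (hv' a) (fun g => hx.1.1 a g)
  -- first-order condition for x (true profile)
  have hA : ∑ a, w a / u a ≤ n := by
    apply firstOrder u w hu
    intro t ht
    have halloc := comb_alloc hx.1 hx'.1 ht
    have := hx.2 _ halloc
    calc (∏ a, ((1-t) * u a + t * w a))
        = ∏ a, addVal (v a) (fun g => (1-t) * x a g + t * x' a g) := by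
          apply Finset.prod_congr rfl; intro a _; rw [addVal_comb]
      _ ≤ ∏ a, u a := this
  -- first-order condition for x' (manipulated profile)
  have hB : ∑ a, w' a / u' a ≤ n := by
    apply firstOrder u' w' hu'
    intro t ht
    have halloc := comb_alloc hx'.1 hx.1 ht
    have := hx'.2 _ halloc
    calc (∏ a, ((1-t) * u' a + t * w' a))
        = ∏ a, addVal (v' a) (fun g => (1-t) * x' a g + t * x a g) := by
          apply Finset.prod_congr rfl; intro a _; rw [addVal_comb]
      _ ≤ ∏ a, u' a := this
  set T : Finset (Fin n) := univ \ C with hT_def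
  have hwT : ∀ a ∈ T, 0 < w a := by
    intro a ha
    have haC : a ∉ C := (Finset.mem_sdiff.mp ha).2
    have : u' a = w a := by simp [hu'_def, hw_def, hhonest a haC]
    rw [← this]; exact hu' a
  -- honest agents: sum of reciprocals bounded
  have hBT : ∑ a ∈ T, u a / w a ≤ n := by
    have heq : ∀ a ∈ T, u a / w a = w' a / u' a := by
      intro a ha
      have haC : a ∉ C := (Finset.mem_sdiff.mp ha).2
      simp [hu_def, hw_def, hu'_def, hw'_def, hhonest a haC]
    calc ∑ a ∈ T, u a / w a = ∑ a ∈ T, w' a / u' a := Finset.sum_congr rfl heq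
      _ ≤ ∑ a, w' a / u' a := Finset.sum_le_sum_of_subset_of_nonneg (Finset.subset_univ T)
          (fun a _ _ => div_nonneg (hw' a) (hu' a).le)
      _ ≤ n := hB
  -- Cauchy-Schwarz on T
  have hCS : ((T.card : ℝ))^2 ≤ (∑ a ∈ T, w a / u a) * ∑ a ∈ T, u a / w a := by
    have := Finset.sum_sq_le_sum_mul_sum_of_sq_eq_mul T
      (r := fun _ => (1:ℝ)) (f := fun a => w a / u a) (g := fun a => u a / w a)
      (fun a ha => div_nonneg (hw a) (hu a).le)
      (fun a ha => div_nonneg (hu a).le (hwT a ha).le)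
      (fun a ha => by
        have h1 := (hu a).ne'
        have h2 := (hwT a ha).ne'
        field_simp)
    simpa using this
  have hTsum_nonneg : 0 ≤ ∑ a ∈ T, w a / u a :=
    Finset.sum_nonneg fun a ha => div_nonneg (hw a) (hu a).le
  have hNR : (0:ℝ) < n := by exact_mod_cast hn
  have hQsum : ((T.card : ℝ))^2 ≤ (∑ a ∈ T, w a / u a) * n :=
    le_trans hCS (by
      apply mul_le_mul_of_nonneg_left hBT hTsum_nonneg)
  -- sum over C is at least w b / u b + (card C - 1)
  have hsplit : ∑ a ∈ C, w a / u a + ∑ a ∈ T, w a / u a = ∑ a, w a / u a := by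
    rw [hT_def, ← Finset.sum_sdiff (Finset.subset_univ C)]
    ring
  have hCsum : w b / u b + ((C.card : ℝ) - 1) ≤ ∑ a ∈ C, w a / u a := by
    have herase : ∑ a ∈ C, w a / u a = w b / u b + ∑ a ∈ C.erase b, w a / u a := by
      rw [← Finset.add_sum_erase C _ hb]
    have hbound : ((C.erase b).card : ℝ) ≤ ∑ a ∈ C.erase b, w a / u a := by
      have := Finset.card_nsmul_le_sum (C.erase b) (fun a => w a / u a) 1
        (fun a ha => (one_le_div (hu a)).mpr (hbetter a (Finset.mem_of_mem_erase ha)))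
      simpa using this
    have hcard : ((C.erase b).card : ℝ) = (C.card : ℝ) - 1 := by
      rw [Finset.card_erase_of_mem hb]
      have : 1 ≤ C.card := Finset.card_pos.mpr ⟨b, hb⟩
      push_cast [Nat.cast_sub this]
      ring
    rw [herase]
    linarith [hcard ▸ hbound]
  -- cardinalities
  have hTcard : (T.card : ℝ) = (n : ℝ) - (C.card : ℝ) := by
    rw [hT_def, Finset.card_sdiff_of_subset (Finset.subset_univ C), Finset.card_univ, Fintype.card_fin]
    have : C.card ≤ n := le_trans (Finset.card_le_card (Finset.subset_univ C)) (by simp)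
    push_cast [Nat.cast_sub this]
    ring
  have hCcard1 : (1:ℝ) ≤ (C.card : ℝ) := by
    exact_mod_cast Finset.card_pos.mpr ⟨b, hb⟩
  have hCcardc : (C.card : ℝ) ≤ (c : ℝ) := by exact_mod_cast hC
  have hCcardn : (C.card : ℝ) ≤ (n : ℝ) := by
    have : C.card ≤ n := le_trans (Finset.card_le_card (Finset.subset_univ C)) (by simp)
    exact_mod_cast this
  -- final arithmetic
  have hub := hu b
  rw [hu_def, hw_def] at *
  have hgoal : addVal (v b) (x' b) / addVal (v b) (x b) ≤ (c:ℝ) + 1 := by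
    set R := addVal (v b) (x' b) / addVal (v b) (x b)
    set Q := ∑ a ∈ T, addVal (v a) (x' a) / addVal (v a) (x a)
    set S := (C.card : ℝ)
    set N := (n : ℝ)
    have h1 : R + (S - 1) + Q ≤ N := by
      have := hA
      linarith [hCsum, hsplit]
    have h2 : (N - S)^2 ≤ Q * N := by
      rw [← hTcard]; exact hQsum
    nlinarith [mul_pos hNR hNR, sq_nonneg (N - S), mul_nonneg (sub_nonneg.mpr hCcardn) (sub_nonneg.mpr hCcardc)]
  calc addVal (v b) (x' b) = (addVal (v b) (x' b) / addVal (v b) (x b)) * addVal (v b) (x b) := by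
        field_simp
    _ ≤ ((c:ℝ) + 1) * addVal (v b) (x b) := by
        apply mul_le_mul_of_nonneg_right hgoal hub.le
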